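/- arXiv:2502.13786 — 2 statements merged into one kernel-verified Lean document; each statement's English description precedes it below -/
import Mathlib

section
/- Let G be a locally compact abelian group, S ⊆ G and Σ ⊆ Ĝ measurable. Let P_S f = 1_S f and Q_Σ = F^{-1} 1_Σ F, where F is the (unitary) Fourier transform. If ‖P_S Q_Σ‖_{L²→L²} < 1, then (S,Σ) is a strong annihilating pair: for every f ∈ L²(G), ‖f‖_{L²(G)} ≤ C (‖f‖_{L²(G∖S)} + ‖f̂‖_{L²(Ĝ∖Σ)}) with C = 1 + (1 − ‖P_S Q_Σ‖²)^{-1/2}. -/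
open Finset ComplexConjugate

/-- ℓ²-norm of `f` over the finite set `T`. -/
noncomputable def l2norm {α : Type*} (T : Finset α) (f : α → ℂ) : ℝ :=
  Real.sqrt (∑ x ∈ T, ‖f x‖ ^ 2)

/-- ℓ^p-norm (p a real exponent) of `f` over the finite set `T`. -/
noncomputable def lpnorm {α : Type*} (p : ℝ) (T : Finset α) (f : α → ℂ) : ℝ :=
  (∑ x ∈ T, ‖f x‖ ^ p) ^ (1 / p)

/-- The unitary Fourier transform on a finite abelian group:
`f̂(χ) = |G|^{-1/2} ∑_x f x * conj (χ x)`. -/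
noncomputable def dft {G : Type*} [AddCommGroup G] [Fintype G]
    (f : G → ℂ) (χ : AddChar G ℂ) : ℂ :=
  (Real.sqrt (Fintype.card G) : ℂ)⁻¹ * ∑ x, f x * conj (χ x)

/-- The inverse Fourier transform on a finite abelian group. -/
noncomputable def idft {G : Type*} [AddCommGroup G] [Fintype G]
    (g : AddChar G ℂ → ℂ) (x : G) : ℂ :=
  (Real.sqrt (Fintype.card G) : ℂ)⁻¹ * ∑ χ, g χ * χ x

section helpers
variable {G : Type} [AddCommGroup G] [Fintype G] [DecidableEq G]

lemma csq : ((Real.sqrt (Fintype.card G) : ℂ))⁻¹ * ((Real.sqrt (Fintype.card G) : ℂ))⁻¹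
    * (Fintype.card G : ℂ) = 1 := by
  have h : (0:ℝ) < Fintype.card G := by positivity
  have : (Real.sqrt (Fintype.card G) : ℂ) * (Real.sqrt (Fintype.card G) : ℂ)
      = (Fintype.card G : ℂ) := by
    norm_cast
    rw [Real.mul_self_sqrt h.le]
  field_simp
  rw [sq]
  exact this.symm


lemma idft_dft (f : G → ℂ) (x : G) : idft (dft f) x = f x := by
  classical
  have key : ∀ y : G, (∑ χ : AddChar G ℂ, conj (χ y) * χ x)
      = if y = x then (Fintype.card G : ℂ) else 0 := by
    intro y
    have h1 : ∀ χ : AddChar G ℂ, conj (χ y) * χ x = χ (x - y) := by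
      intro χ
      rw [← AddChar.map_neg_eq_conj, ← AddChar.map_add_eq_mul, neg_add_eq_sub]
    simp only [h1]
    rw [AddChar.sum_apply_eq_ite]
    simp [sub_eq_zero, eq_comm]
  calc idft (dft f) x
      = (Real.sqrt (Fintype.card G) : ℂ)⁻¹ * (Real.sqrt (Fintype.card G) : ℂ)⁻¹
        * ∑ y, f y * ∑ χ : AddChar G ℂ, conj (χ y) * χ x := by
        unfold idft dft
        simp only [Finset.sum_mul, Finset.mul_sum]
        rw [Finset.sum_comm]
        congr 1
        ext y
        congr 1
        ext χ
        ring
    _ = f x := by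
        simp only [key, mul_ite, mul_zero]
        rw [Finset.sum_ite_eq' Finset.univ x (fun y => f y * (Fintype.card G : ℂ))]
        simp only [Finset.mem_univ, if_true]
        have h := csq (G := G)
        linear_combination f x * h

lemma dft_idft (g : AddChar G ℂ → ℂ) (χ : AddChar G ℂ) : dft (idft g) χ = g χ := by
  classical
  have key : ∀ χ' : AddChar G ℂ, (∑ x : G, χ' x * conj (χ x))
      = if χ' = χ then (Fintype.card G : ℂ) else 0 := by
    intro χ'
    have h1 : ∀ x : G, χ' x * conj (χ x) = (χ' - χ) x := by
      intro x
      rw [AddChar.sub_apply, AddChar.map_neg_eq_conj]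
    simp only [h1]
    rw [AddChar.sum_eq_ite]
    simp [sub_eq_zero]
  calc dft (idft g) χ
      = (Real.sqrt (Fintype.card G) : ℂ)⁻¹ * (Real.sqrt (Fintype.card G) : ℂ)⁻¹
        * ∑ χ' : AddChar G ℂ, g χ' * ∑ x : G, χ' x * conj (χ x) := by
        unfold idft dft
        simp only [Finset.sum_mul, Finset.mul_sum]
        rw [Finset.sum_comm]
        congr 1
        ext x
        congr 1
        ext χ'
        ring
    _ = g χ := by
        simp only [key, mul_ite, mul_zero]
        rw [Finset.sum_ite_eq' Finset.univ χ (fun ψ => g ψ * (Fintype.card G : ℂ))]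
        simp only [Finset.mem_univ, if_true]
        have h := csq (G := G)
        linear_combination g χ * h

lemma dft_adjoint (f : G → ℂ) (g : AddChar G ℂ → ℂ) :
    ∑ χ : AddChar G ℂ, dft f χ * conj (g χ) = ∑ x : G, f x * conj (idft g x) := by
  unfold dft idft
  simp only [map_mul, map_sum, map_inv₀, Complex.conj_ofReal, Finset.mul_sum, Finset.sum_mul]
  rw [Finset.sum_comm]
  refine Finset.sum_congr rfl fun x _ => Finset.sum_congr rfl fun χ _ => ?_
  ring

lemma parseval (f : G → ℂ) : ∑ χ : AddChar G ℂ, ‖dft f χ‖ ^ 2 = ∑ x : G, ‖f x‖ ^ 2 := by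
  have h := dft_adjoint f (dft f)
  have h2 : ∀ x : G, f x * conj (idft (dft f) x) = f x * conj (f x) := by
    intro x; rw [idft_dft]
  rw [Finset.sum_congr rfl (fun x _ => h2 x)] at h
  have h3 : ((∑ χ : AddChar G ℂ, ‖dft f χ‖ ^ 2 : ℝ) : ℂ) = ((∑ x : G, ‖f x‖ ^ 2 : ℝ) : ℂ) := by
    push_cast
    simpa only [Complex.mul_conj'] using h
  exact_mod_cast h3

lemma dft_sub (u v : G → ℂ) (χ : AddChar G ℂ) :
    dft (fun x => u x - v x) χ = dft u χ - dft v χ := by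
  unfold dft
  rw [← mul_sub, ← Finset.sum_sub_distrib]
  congr 1
  refine Finset.sum_congr rfl fun x _ => ?_
  ring

end helpers

lemma le_of_sq_le_sq'' {x y : ℝ} (hx : 0 ≤ x) (hy : 0 ≤ y) (h : x ^ 2 ≤ y ^ 2) : x ≤ y := by
  have h2 := Real.sqrt_le_sqrt h
  rwa [Real.sqrt_sq hx, Real.sqrt_sq hy] at h2

lemma l2norm_nonneg {α : Type*} (T : Finset α) (f : α → ℂ) : 0 ≤ l2norm T f :=
  Real.sqrt_nonneg _

lemma l2norm_sq {α : Type*} (T : Finset α) (f : α → ℂ) :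
    l2norm T f ^ 2 = ∑ x ∈ T, ‖f x‖ ^ 2 :=
  Real.sq_sqrt (by positivity)

lemma l2norm_add_le {α : Type*} (T : Finset α) (u v : α → ℂ) :
    l2norm T (fun x => u x + v x) ≤ l2norm T u + l2norm T v := by
  have ha := l2norm_nonneg T u
  have hb := l2norm_nonneg T v
  have hcs := Finset.sum_mul_sq_le_sq_mul_sq T (fun x => ‖u x‖) (fun x => ‖v x‖)
  have huv : (0:ℝ) ≤ ∑ x ∈ T, ‖u x‖ * ‖v x‖ := by positivity
  have hab : ∑ x ∈ T, ‖u x‖ * ‖v x‖ ≤ l2norm T u * l2norm T v := by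
    apply le_of_sq_le_sq'' huv (by positivity)
    rw [mul_pow, l2norm_sq, l2norm_sq]
    exact hcs
  apply le_of_sq_le_sq'' (l2norm_nonneg _ _) (by positivity)
  rw [l2norm_sq]
  have step1 : ∑ x ∈ T, ‖u x + v x‖ ^ 2 ≤ ∑ x ∈ T, (‖u x‖ + ‖v x‖) ^ 2 :=
    Finset.sum_le_sum fun x _ => pow_le_pow_left₀ (norm_nonneg _) (norm_add_le _ _) 2
  have step2 : ∑ x ∈ T, (‖u x‖ + ‖v x‖) ^ 2
      = (∑ x ∈ T, ‖u x‖ ^ 2) + 2 * (∑ x ∈ T, ‖u x‖ * ‖v x‖) + ∑ x ∈ T, ‖v x‖ ^ 2 := by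
    rw [Finset.mul_sum, ← Finset.sum_add_distrib, ← Finset.sum_add_distrib]
    exact Finset.sum_congr rfl fun x _ => by ring
  have e1 := l2norm_sq T u
  have e2 := l2norm_sq T v
  nlinarith [step1, step2, hab]

lemma l2norm_mono {α : Type*} [Fintype α] (T : Finset α) (f : α → ℂ) :
    l2norm T f ≤ l2norm Finset.univ f := by
  apply Real.sqrt_le_sqrt
  exact Finset.sum_le_sum_of_subset_of_nonneg (Finset.subset_univ T)
    (fun x _ _ => by positivity)

set_option maxHeartbeats 1000000


/-- if the time-frequency limiting operator `P_S Q_Σ` has operator norm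
(bounded by some) `A < 1`, then `(S,Σ)` is a strong annihilating pair with constant
`1 + (1 - A²)^{-1/2}`. -/
theorem stmt10 {G : Type} [AddCommGroup G] [Fintype G] [DecidableEq G]
    (S : Finset G) (Sig : Finset (AddChar G ℂ)) (A : ℝ) (hA : A < 1)
    (hop : ∀ f : G → ℂ,
      l2norm Finset.univ
          (fun x => if x ∈ S then
            idft (fun χ => if χ ∈ Sig then dft f χ else 0) x else 0) ≤
        A * l2norm Finset.univ f) :
    ∀ f : G → ℂ,
      l2norm Finset.univ f ≤
        (1 + (Real.sqrt (1 - A ^ 2))⁻¹) * (l2norm Sᶜ f + l2norm Sigᶜ (dft f)) := by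
  intro f
  classical
  -- A is nonnegative
  have h0 : 0 ≤ A := by
    by_contra hneg
    push_neg at hneg
    have h1 := hop (fun _ => (1:ℂ))
    have hL := l2norm_nonneg Finset.univ
      (fun x => if x ∈ S then
        idft (fun χ => if χ ∈ Sig then dft (fun _ => (1:ℂ)) χ else 0) x else 0)
    have hpos : 0 < l2norm Finset.univ (fun _ : G => (1:ℂ)) := by
      unfold l2norm
      apply Real.sqrt_pos.2
      have h2 : (∑ _x : G, ‖(1:ℂ)‖ ^ 2) = (Fintype.card G : ℝ) := by simp
      rw [h2]
      exact_mod_cast Fintype.card_pos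
    nlinarith
  have hA2 : 0 < 1 - A ^ 2 := by nlinarith
  set r := (Real.sqrt (1 - A ^ 2))⁻¹ with hrdef
  have hrpos : 0 < r := by rw [hrdef]; positivity
  have hr2 : r ^ 2 * (1 - A ^ 2) = 1 := by
    rw [hrdef, inv_pow, Real.sq_sqrt hA2.le]
    field_simp
  set Q : G → ℂ := fun x => idft (fun χ => if χ ∈ Sig then dft f χ else 0) x with hQdef
  have hdQ : ∀ χ, dft Q χ = if χ ∈ Sig then dft f χ else 0 := fun χ => dft_idft _ χ
  -- apply hop to Q
  have hop2 := hop Q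
  have hfun : (fun x => if x ∈ S then
      idft (fun χ => if χ ∈ Sig then dft Q χ else 0) x else 0)
      = (fun x => if x ∈ S then Q x else 0) := by
    funext x
    have : (fun χ => if χ ∈ Sig then dft Q χ else 0)
        = (fun χ => if χ ∈ Sig then dft f χ else 0) := by
      funext χ
      rw [hdQ]
      by_cases h : χ ∈ Sig <;> simp [h]
    rw [this, hQdef]
  rw [hfun] at hop2
  set q := l2norm Finset.univ Q with hqdef
  set a := l2norm Sᶜ f with hadef
  set b := l2norm Sigᶜ (dft f) with hbdef
  have ha0 : 0 ≤ a := l2norm_nonneg _ _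
  have hb0 : 0 ≤ b := l2norm_nonneg _ _
  have hq0 : 0 ≤ q := l2norm_nonneg _ _
  -- dft of f - Q
  have h2 : ∀ χ : AddChar G ℂ, dft (fun x => f x - Q x) χ = if χ ∈ Sig then 0 else dft f χ := by
    intro χ
    rw [dft_sub, hdQ]
    by_cases h : χ ∈ Sig <;> simp [h]
  -- ‖f - Q‖ = b
  have hd : l2norm Finset.univ (fun x => f x - Q x) = b := by
    have hps : ∑ x : G, ‖f x - Q x‖ ^ 2
        = ∑ χ : AddChar G ℂ, ‖dft (fun x => f x - Q x) χ‖ ^ 2 := (parseval _).symm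
    have hsum : ∑ χ : AddChar G ℂ, ‖dft (fun x => f x - Q x) χ‖ ^ 2
        = ∑ χ ∈ Sigᶜ, ‖dft f χ‖ ^ 2 := by
      rw [← Finset.sum_add_sum_compl Sig]
      have t1 : ∑ χ ∈ Sig, ‖dft (fun x => f x - Q x) χ‖ ^ 2 = 0 :=
        Finset.sum_eq_zero fun χ hχ => by rw [h2, if_pos hχ]; simp
      have t2 : ∑ χ ∈ Sigᶜ, ‖dft (fun x => f x - Q x) χ‖ ^ 2
          = ∑ χ ∈ Sigᶜ, ‖dft f χ‖ ^ 2 :=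
        Finset.sum_congr rfl fun χ hχ => by rw [h2, if_neg (Finset.mem_compl.1 hχ)]
      rw [t1, t2, zero_add]
    rw [hbdef]
    unfold l2norm
    rw [hps, hsum]
  -- Step A : ‖f‖ ≤ q + b
  have hAineq : l2norm Finset.univ f ≤ q + b := by
    have h1 := l2norm_add_le Finset.univ Q (fun x => f x - Q x)
    have he : (fun x => Q x + (f x - Q x)) = f := by funext x; ring
    rw [he, hd] at h1
    exact h1
  -- Pythagoras for Q
  have hsplit : q ^ 2 = (∑ x ∈ S, ‖Q x‖ ^ 2) + ∑ x ∈ Sᶜ, ‖Q x‖ ^ 2 := by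
    rw [hqdef, l2norm_sq]
    exact (Finset.sum_add_sum_compl S _).symm
  -- hop2 rephrased
  have hS_le : ∑ x ∈ S, ‖Q x‖ ^ 2 ≤ (A * q) ^ 2 := by
    have hsum : ∑ x : G, ‖if x ∈ S then Q x else 0‖ ^ 2 = ∑ x ∈ S, ‖Q x‖ ^ 2 := by
      rw [← Finset.sum_add_sum_compl S]
      have t1 : ∑ x ∈ S, ‖if x ∈ S then Q x else 0‖ ^ 2 = ∑ x ∈ S, ‖Q x‖ ^ 2 :=
        Finset.sum_congr rfl fun x hx => by rw [if_pos hx]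
      have t2 : ∑ x ∈ Sᶜ, ‖if x ∈ S then Q x else 0‖ ^ 2 = 0 :=
        Finset.sum_eq_zero fun x hx => by rw [if_neg (Finset.mem_compl.1 hx)]; simp
      rw [t1, t2, add_zero]
    have hL : l2norm Finset.univ (fun x => if x ∈ S then Q x else 0)
        = Real.sqrt (∑ x ∈ S, ‖Q x‖ ^ 2) := by
      unfold l2norm
      rw [hsum]
    rw [hL] at hop2
    have hnn : (0:ℝ) ≤ ∑ x ∈ S, ‖Q x‖ ^ 2 :=
      Finset.sum_nonneg fun x _ => pow_nonneg (norm_nonneg _) 2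
    have := pow_le_pow_left₀ (Real.sqrt_nonneg _) hop2 2
    rwa [Real.sq_sqrt hnn] at this
  -- Step D
  have hD : l2norm Sᶜ Q ≤ a + b := by
    have h1 := l2norm_add_le Sᶜ f (fun x => Q x - f x)
    have he : (fun x => f x + (Q x - f x)) = Q := by funext x; ring
    rw [he] at h1
    have h3 : l2norm Sᶜ (fun x => Q x - f x) ≤ b := by
      have hm := l2norm_mono Sᶜ (fun x => Q x - f x)
      have hsym : l2norm Finset.univ (fun x => Q x - f x)
          = l2norm Finset.univ (fun x => f x - Q x) := by
        unfold l2norm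
        congr 1
        exact Finset.sum_congr rfl fun x _ => by rw [norm_sub_rev]
      rw [hsym, hd] at hm
      exact hm
    calc l2norm Sᶜ Q ≤ a + l2norm Sᶜ (fun x => Q x - f x) := h1
      _ ≤ a + b := by linarith
  -- combine
  have hq2 : q ^ 2 ≤ A ^ 2 * q ^ 2 + (a + b) ^ 2 := by
    have hc : (l2norm Sᶜ Q) ^ 2 ≤ (a + b) ^ 2 :=
      pow_le_pow_left₀ (l2norm_nonneg _ _) hD 2
    rw [l2norm_sq] at hc
    nlinarith [hsplit, hS_le, hc]
  have hq_le : q ≤ r * (a + b) := by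
    apply le_of_sq_le_sq'' hq0 (by positivity)
    have key : (1 - A ^ 2) * q ^ 2 ≤ (a + b) ^ 2 := by nlinarith [hq2]
    have key2 : r ^ 2 * ((1 - A ^ 2) * q ^ 2) ≤ r ^ 2 * (a + b) ^ 2 :=
      mul_le_mul_of_nonneg_left key (sq_nonneg r)
    calc q ^ 2 = r ^ 2 * (1 - A ^ 2) * q ^ 2 := by rw [hr2]; ring
      _ ≤ r ^ 2 * (a + b) ^ 2 := by linarith [key2]
      _ = (r * (a + b)) ^ 2 := by ring
  calc l2norm Finset.univ f ≤ q + b := hAineq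
    _ ≤ r * (a + b) + b := by linarith
    _ ≤ (1 + r) * (a + b) := by nlinarith [ha0, hb0, hrpos.le]
end

section
/- Let G be a finite abelian group, S ⊆ G, Σ ⊆ Ĝ, and let P_S, Q_Σ be as above with A = ‖Q_Σ P_S‖. Then the following are equivalent: (1) A < 1; (2) there exists D > 0 such that ‖f‖_{L²} ≤ D ‖f̂‖_{L²(Ĝ∖Σ)} for every f supported in S; (3) there exists C such that ‖f‖_{L²} ≤ C(‖f‖_{L²(G∖S)} + ‖f̂‖_{L²(Ĝ∖Σ)}) for all f. Moreover when A < 1 one can take D = (1−A²)^{-1/2} and D ≤ C ≤ D + 1. -/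
open Finset ComplexConjugate

/-- The ℓ²-operator norm of a map `T` on functions on a finite type. -/
noncomputable def opNorm2 {α : Type*} [Fintype α] (T : (α → ℂ) → (α → ℂ)) : ℝ :=
  sSup ((fun f => l2norm Finset.univ (T f)) '' {f | l2norm Finset.univ f ≤ 1})

lemma l2norm_congr {α : Type*} (T : Finset α) {f g : α → ℂ} (h : ∀ x ∈ T, f x = g x) :
    l2norm T f = l2norm T g := by
  unfold l2norm; congr 1; exact Finset.sum_congr rfl fun x hx => by rw [h x hx]

lemma l2norm_le_of_sq_le_sq {α β : Type*} (T : Finset α) (T' : Finset β) {f : α → ℂ} {g : β → ℂ}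
    (h : ∑ x ∈ T, ‖f x‖ ^ 2 ≤ ∑ x ∈ T', ‖g x‖ ^ 2) : l2norm T f ≤ l2norm T' g :=
  Real.sqrt_le_sqrt h

lemma sqrt_add_le' (a b : ℝ) (ha : 0 ≤ a) (hb : 0 ≤ b) :
    Real.sqrt (a + b) ≤ Real.sqrt a + Real.sqrt b := by
  have h : a + b ≤ (Real.sqrt a + Real.sqrt b) ^ 2 := by
    nlinarith [Real.sq_sqrt ha, Real.sq_sqrt hb,
      mul_nonneg (Real.sqrt_nonneg a) (Real.sqrt_nonneg b)]
  calc Real.sqrt (a + b) ≤ Real.sqrt ((Real.sqrt a + Real.sqrt b) ^ 2) := Real.sqrt_le_sqrt h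
    _ = Real.sqrt a + Real.sqrt b := Real.sqrt_sq (by positivity)

lemma l2norm_smul {α : Type*} (T : Finset α) (c : ℂ) (f : α → ℂ) :
    l2norm T (fun x => c * f x) = ‖c‖ * l2norm T f := by
  unfold l2norm
  simp_rw [norm_mul, mul_pow]
  rw [← Finset.mul_sum, Real.sqrt_mul (by positivity), Real.sqrt_sq (norm_nonneg c)]

/-! ### orthogonality and Plancherel -/

lemma orth_dual {G : Type} [AddCommGroup G] [Fintype G] [DecidableEq G] (x y : G) :
    ∑ χ : AddChar G ℂ, conj (χ x) * χ y = if x = y then (Fintype.card G : ℂ) else 0 := by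
  have h : ∀ χ : AddChar G ℂ, conj (χ x) * χ y = χ (-x + y) := fun χ => by
    rw [AddChar.map_add_eq_mul, AddChar.map_neg_eq_conj]
  simp_rw [h, AddChar.sum_apply_eq_ite, neg_add_eq_zero]

lemma orth_group {G : Type} [AddCommGroup G] [Fintype G] (χ χ' : AddChar G ℂ) :
    ∑ x : G, χ x * conj (χ' x) = if χ = χ' then (Fintype.card G : ℂ) else 0 := by
  classical
  have h : ∀ x : G, χ x * conj (χ' x) = (χ * χ'⁻¹) x := fun x => by
    rw [AddChar.mul_apply, AddChar.inv_apply', AddChar.inv_apply_eq_conj]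
  simp_rw [h, AddChar.sum_eq_ite, ← AddChar.one_eq_zero, mul_inv_eq_one]

lemma sum_norm_sq_map {I J : Type*} [Fintype I] [Fintype J] [DecidableEq I]
    (U : J → I → ℂ) (hU : ∀ x y : I, ∑ j, conj (U j x) * U j y = if x = y then 1 else 0)
    (f : I → ℂ) : ∑ j, ‖∑ x, U j x * f x‖ ^ 2 = ∑ x, ‖f x‖ ^ 2 := by
  have key : ∑ j, conj (∑ x, U j x * f x) * (∑ x, U j x * f x)
      = ∑ x, conj (f x) * f x := by
    have e1 : ∀ j, conj (∑ x, U j x * f x) * (∑ x, U j x * f x)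
        = ∑ x, ∑ y, (conj (f x) * f y) * (conj (U j x) * U j y) := by
      intro j
      rw [map_sum, Finset.sum_mul_sum]
      refine Finset.sum_congr rfl fun x _ => Finset.sum_congr rfl fun y _ => ?_
      rw [map_mul]; ring
    simp_rw [e1]
    rw [Finset.sum_comm]
    have e2 : ∀ x, ∑ j, ∑ y, (conj (f x) * f y) * (conj (U j x) * U j y)
        = ∑ y, (conj (f x) * f y) * ∑ j, conj (U j x) * U j y := by
      intro x; rw [Finset.sum_comm]; simp_rw [Finset.mul_sum]
    simp_rw [e2, hU, mul_ite, mul_one, mul_zero, Finset.sum_ite_eq, Finset.mem_univ, if_true]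
  simp_rw [RCLike.conj_mul] at key
  exact_mod_cast key

section plancherel
variable {G : Type} [AddCommGroup G] [Fintype G] [DecidableEq G]

lemma plancherel_dft (f : G → ℂ) :
    ∑ χ : AddChar G ℂ, ‖dft f χ‖ ^ 2 = ∑ x, ‖f x‖ ^ 2 := by
  have hd : ∀ χ : AddChar G ℂ, dft f χ
      = ∑ x, ((Real.sqrt (Fintype.card G) : ℂ)⁻¹ * conj (χ x)) * f x := by
    intro χ; rw [dft, Finset.mul_sum]; refine Finset.sum_congr rfl fun x _ => by ring
  simp_rw [hd]
  refine sum_norm_sq_map _ (fun x y => ?_) f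
  have : ∀ χ : AddChar G ℂ,
      conj ((Real.sqrt (Fintype.card G) : ℂ)⁻¹ * conj (χ x))
        * ((Real.sqrt (Fintype.card G) : ℂ)⁻¹ * conj (χ y))
      = (Real.sqrt (Fintype.card G) : ℂ)⁻¹ * (Real.sqrt (Fintype.card G) : ℂ)⁻¹
        * (conj (χ y) * χ x) := by
    intro χ
    simp only [map_mul, map_inv₀, Complex.conj_conj, Complex.conj_ofReal]
    ring
  simp_rw [this, ← Finset.mul_sum, orth_dual y x]
  by_cases h : x = y
  · subst h; simp [csq]
  · simp [h, Ne.symm h]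

lemma plancherel_idft (g : AddChar G ℂ → ℂ) :
    ∑ x : G, ‖idft g x‖ ^ 2 = ∑ χ : AddChar G ℂ, ‖g χ‖ ^ 2 := by
  have hd : ∀ x : G, idft g x
      = ∑ χ : AddChar G ℂ, ((Real.sqrt (Fintype.card G) : ℂ)⁻¹ * χ x) * g χ := by
    intro x; rw [idft, Finset.mul_sum]; refine Finset.sum_congr rfl fun χ _ => by ring
  simp_rw [hd]
  refine sum_norm_sq_map _ (fun χ χ' => ?_) g
  have : ∀ x : G,
      conj ((Real.sqrt (Fintype.card G) : ℂ)⁻¹ * χ x)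
        * ((Real.sqrt (Fintype.card G) : ℂ)⁻¹ * χ' x)
      = (Real.sqrt (Fintype.card G) : ℂ)⁻¹ * (Real.sqrt (Fintype.card G) : ℂ)⁻¹
        * (χ' x * conj (χ x)) := by
    intro x
    simp only [map_mul, map_inv₀, Complex.conj_ofReal]
    ring
  simp_rw [this, ← Finset.mul_sum, orth_group χ' χ]
  by_cases h : χ = χ'
  · subst h; simp [csq]
  · simp [h, Ne.symm h]

lemma dft_smul (c : ℂ) (g : G → ℂ) (χ : AddChar G ℂ) :
    dft (fun y => c * g y) χ = c * dft g χ := by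
  unfold dft
  simp_rw [mul_assoc]
  rw [← Finset.mul_sum]
  ring

lemma idft_smul (c : ℂ) (g : AddChar G ℂ → ℂ) (x : G) :
    idft (fun χ => c * g χ) x = c * idft g x := by
  unfold idft
  simp_rw [mul_assoc]
  rw [← Finset.mul_sum]
  ring

lemma dft_add (u v : G → ℂ) (χ : AddChar G ℂ) :
    dft (fun y => u y + v y) χ = dft u χ + dft v χ := by
  unfold dft
  simp_rw [add_mul]
  rw [Finset.sum_add_distrib, mul_add]

end plancherel

/-! ### the operator Q_Σ P_S -/

section op
set_option linter.unusedSectionVars false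
variable {G : Type} [AddCommGroup G] [Fintype G] [DecidableEq G]
    (S : Finset G) (Sig : Finset (AddChar G ℂ))

noncomputable def Qop (S : Finset G) (Sig : Finset (AddChar G ℂ)) : (G → ℂ) → (G → ℂ) :=
  fun f => idft (fun χ => if χ ∈ Sig then
    dft (fun x => if x ∈ S then f x else 0) χ else 0)

lemma Qop_sq (f : G → ℂ) : ∑ x, ‖Qop S Sig f x‖ ^ 2
    = ∑ χ ∈ Sig, ‖dft (fun x => if x ∈ S then f x else 0) χ‖ ^ 2 := by
  rw [Qop, plancherel_idft]
  have h : ∀ χ : AddChar G ℂ,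
      ‖if χ ∈ Sig then dft (fun x => if x ∈ S then f x else 0) χ else 0‖ ^ 2
      = if χ ∈ Sig then ‖dft (fun x => if x ∈ S then f x else 0) χ‖ ^ 2 else 0 := by
    intro χ; split <;> simp
  simp_rw [h]
  rw [Finset.sum_ite_mem, Finset.univ_inter]

lemma proj_sq (f : G → ℂ) :
    ∑ x, ‖(if x ∈ S then f x else 0 : ℂ)‖ ^ 2 = ∑ x ∈ S, ‖f x‖ ^ 2 := by
  have h : ∀ x : G, ‖(if x ∈ S then f x else 0 : ℂ)‖ ^ 2
      = if x ∈ S then ‖f x‖ ^ 2 else 0 := by intro x; split <;> simp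
  simp_rw [h]
  rw [Finset.sum_ite_mem, Finset.univ_inter]

lemma proj_le (f : G → ℂ) :
    ∑ x, ‖(if x ∈ S then f x else 0 : ℂ)‖ ^ 2 ≤ ∑ x, ‖f x‖ ^ 2 := by
  rw [proj_sq]
  exact Finset.sum_le_sum_of_subset_of_nonneg (Finset.subset_univ S)
    (fun x _ _ => by positivity)

lemma Qop_contr (f : G → ℂ) : ∑ x, ‖Qop S Sig f x‖ ^ 2 ≤ ∑ x, ‖f x‖ ^ 2 := by
  rw [Qop_sq]
  calc ∑ χ ∈ Sig, ‖dft (fun x => if x ∈ S then f x else 0) χ‖ ^ 2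
      ≤ ∑ χ : AddChar G ℂ, ‖dft (fun x => if x ∈ S then f x else 0) χ‖ ^ 2 :=
        Finset.sum_le_sum_of_subset_of_nonneg (Finset.subset_univ Sig)
          (fun χ _ _ => by positivity)
    _ = ∑ x, ‖(if x ∈ S then f x else 0 : ℂ)‖ ^ 2 := plancherel_dft _
    _ ≤ ∑ x, ‖f x‖ ^ 2 := proj_le S f

lemma Qop_bdd : BddAbove
    ((fun f => l2norm Finset.univ (Qop S Sig f)) '' {f | l2norm Finset.univ f ≤ 1}) := by
  refine ⟨1, ?_⟩
  rintro _ ⟨f, hf, rfl⟩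
  exact le_trans (l2norm_le_of_sq_le_sq _ _ (Qop_contr S Sig f)) hf

lemma Qop_nonneg : 0 ≤ opNorm2 (Qop S Sig) := by
  refine le_trans (l2norm_nonneg Finset.univ (Qop S Sig (fun _ => 0))) ?_
  exact le_csSup (Qop_bdd S Sig) ⟨fun _ => 0, by simp [l2norm], rfl⟩

lemma Qop_smul (c : ℂ) (f : G → ℂ) (x : G) :
    Qop S Sig (fun y => c * f y) x = c * Qop S Sig f x := by
  rw [Qop, Qop]
  have h1 : (fun x => if x ∈ S then c * f x else 0)
      = fun x => c * (if x ∈ S then f x else 0) := by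
    funext x; split <;> simp
  rw [h1]
  have h2 : (fun χ => if χ ∈ Sig then dft (fun x => c * (if x ∈ S then f x else 0)) χ else 0)
      = fun χ => c * (if χ ∈ Sig then dft (fun x => if x ∈ S then f x else 0) χ else 0) := by
    funext χ
    rw [dft_smul]
    split <;> simp
  rw [h2, idft_smul]

lemma Qop_le (f : G → ℂ) :
    l2norm Finset.univ (Qop S Sig f) ≤ opNorm2 (Qop S Sig) * l2norm Finset.univ f := by
  rcases eq_or_ne (l2norm Finset.univ f) 0 with h0 | h0
  · have hz : ∑ x, ‖f x‖ ^ 2 = 0 := by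
      have := l2norm_sq Finset.univ f; rw [h0] at this; simpa using this.symm
    have hz2 : ∑ x, ‖Qop S Sig f x‖ ^ 2 = 0 :=
      le_antisymm (hz ▸ Qop_contr S Sig f) (Finset.sum_nonneg fun x _ => by positivity)
    rw [h0, mul_zero, l2norm, hz2, Real.sqrt_zero]
  · have hpos : 0 < l2norm Finset.univ f :=
      lt_of_le_of_ne (l2norm_nonneg _ _) (Ne.symm h0)
    set r := l2norm Finset.univ f with hr
    have hgnorm : l2norm Finset.univ (fun x => ((r⁻¹ : ℝ) : ℂ) * f x) = 1 := by
      rw [l2norm_smul, Complex.norm_real, Real.norm_eq_abs,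
        abs_of_pos (inv_pos.2 hpos), ← hr, inv_mul_cancel₀ h0]
    have hmem : l2norm Finset.univ (Qop S Sig (fun x => ((r⁻¹ : ℝ) : ℂ) * f x))
        ≤ opNorm2 (Qop S Sig) :=
      le_csSup (Qop_bdd S Sig) ⟨_, le_of_eq hgnorm, rfl⟩
    have heq : l2norm Finset.univ (Qop S Sig (fun x => ((r⁻¹ : ℝ) : ℂ) * f x))
        = r⁻¹ * l2norm Finset.univ (Qop S Sig f) := by
      rw [l2norm_congr Finset.univ (fun x _ => Qop_smul S Sig _ f x), l2norm_smul,
        Complex.norm_real, Real.norm_eq_abs, abs_of_pos (inv_pos.2 hpos)]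
    rw [heq] at hmem
    calc l2norm Finset.univ (Qop S Sig f)
        = r * (r⁻¹ * l2norm Finset.univ (Qop S Sig f)) := by
          field_simp
      _ ≤ r * opNorm2 (Qop S Sig) := mul_le_mul_of_nonneg_left hmem hpos.le
      _ = opNorm2 (Qop S Sig) * r := mul_comm _ _

end op

section main
set_option linter.unusedSectionVars false
variable {G : Type} [AddCommGroup G] [Fintype G] [DecidableEq G]
    (S : Finset G) (Sig : Finset (AddChar G ℂ))

lemma l2norm_neg {α : Type*} (T : Finset α) (u : α → ℂ) :
    l2norm T (fun x => -(u x)) = l2norm T u := by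
  unfold l2norm; simp

lemma annih_of_lt (hA1 : opNorm2 (Qop S Sig) < 1) (f : G → ℂ)
    (hf : ∀ x, x ∉ S → f x = 0) :
    l2norm Finset.univ f
      ≤ (Real.sqrt (1 - opNorm2 (Qop S Sig) ^ 2))⁻¹ * l2norm Sigᶜ (dft f) := by
  set A := opNorm2 (Qop S Sig) with hA
  have hA0 : 0 ≤ A := Qop_nonneg S Sig
  have h1A : 0 < 1 - A ^ 2 := by nlinarith
  have hPf : (fun x => if x ∈ S then f x else 0) = f := by
    funext x; by_cases h : x ∈ S
    · simp [h]
    · simp [h, hf x h]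
  have e1 : ∑ χ ∈ Sig, ‖dft f χ‖ ^ 2 ≤ A ^ 2 * ∑ x, ‖f x‖ ^ 2 := by
    have h3 : l2norm Finset.univ (Qop S Sig f) ^ 2 ≤ (A * l2norm Finset.univ f) ^ 2 :=
      pow_le_pow_left₀ (l2norm_nonneg _ _) (Qop_le S Sig f) 2
    rw [l2norm_sq, mul_pow, l2norm_sq, Qop_sq, hPf] at h3
    exact h3
  have e2 : ∑ χ ∈ Sig, ‖dft f χ‖ ^ 2 + ∑ χ ∈ Sigᶜ, ‖dft f χ‖ ^ 2 = ∑ x, ‖f x‖ ^ 2 := by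
    rw [Finset.sum_add_sum_compl, plancherel_dft]
  have e3 : ∑ x, ‖f x‖ ^ 2 ≤ (1 - A ^ 2)⁻¹ * ∑ χ ∈ Sigᶜ, ‖dft f χ‖ ^ 2 := by
    rw [inv_mul_eq_div, le_div_iff₀ h1A]; nlinarith
  calc l2norm Finset.univ f = Real.sqrt (∑ x, ‖f x‖ ^ 2) := rfl
    _ ≤ Real.sqrt ((1 - A ^ 2)⁻¹ * ∑ χ ∈ Sigᶜ, ‖dft f χ‖ ^ 2) := Real.sqrt_le_sqrt e3
    _ = Real.sqrt ((1 - A ^ 2)⁻¹) * Real.sqrt (∑ χ ∈ Sigᶜ, ‖dft f χ‖ ^ 2) :=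
        Real.sqrt_mul (by positivity) _
    _ = (Real.sqrt (1 - A ^ 2))⁻¹ * l2norm Sigᶜ (dft f) := by rw [Real.sqrt_inv]; rfl

lemma lt_of_annih (h : ∃ D > 0, ∀ f : G → ℂ, (∀ x, x ∉ S → f x = 0) →
    l2norm Finset.univ f ≤ D * l2norm Sigᶜ (dft f)) :
    opNorm2 (Qop S Sig) < 1 := by
  obtain ⟨D, hD, h2⟩ := h
  set D' := max D 1 with hD'
  have hD'1 : (1 : ℝ) ≤ D' := le_max_right _ _
  have hD'2 : (0 : ℝ) < D' ^ 2 := by positivity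
  have ht0 : 0 ≤ 1 - (D' ^ 2)⁻¹ := by
    have h1 : (1 : ℝ) ≤ D' ^ 2 := by nlinarith
    have : (D' ^ 2)⁻¹ ≤ 1 := inv_le_one_of_one_le₀ h1
    linarith
  have hkey : ∀ f : G → ℂ, l2norm Finset.univ f ≤ 1 →
      l2norm Finset.univ (Qop S Sig f) ≤ Real.sqrt (1 - (D' ^ 2)⁻¹) := by
    intro f hf
    set g : G → ℂ := fun x => if x ∈ S then f x else 0 with hg
    have hsupp : ∀ x, x ∉ S → g x = 0 := fun x hx => by simp [hg, hx]
    have h4 : l2norm Finset.univ g ≤ D' * l2norm Sigᶜ (dft g) :=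
      (h2 g hsupp).trans (mul_le_mul_of_nonneg_right (le_max_left _ _) (l2norm_nonneg _ _))
    have h5 : ∑ x, ‖g x‖ ^ 2 ≤ D' ^ 2 * ∑ χ ∈ Sigᶜ, ‖dft g χ‖ ^ 2 := by
      have := pow_le_pow_left₀ (l2norm_nonneg _ _) h4 2
      rw [l2norm_sq, mul_pow, l2norm_sq] at this
      exact this
    have h6 : ∑ χ ∈ Sig, ‖dft g χ‖ ^ 2 + ∑ χ ∈ Sigᶜ, ‖dft g χ‖ ^ 2 = ∑ x, ‖g x‖ ^ 2 := by
      rw [Finset.sum_add_sum_compl, plancherel_dft]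
    have h7 : ∑ x, ‖g x‖ ^ 2 ≤ 1 := by
      calc ∑ x, ‖g x‖ ^ 2 ≤ ∑ x, ‖f x‖ ^ 2 := proj_le S f
        _ = l2norm Finset.univ f ^ 2 := (l2norm_sq _ _).symm
        _ ≤ 1 := by nlinarith [l2norm_nonneg Finset.univ f]
    have h9 : (D' ^ 2)⁻¹ * ∑ x, ‖g x‖ ^ 2 ≤ ∑ χ ∈ Sigᶜ, ‖dft g χ‖ ^ 2 := by
      rw [inv_mul_eq_div, div_le_iff₀ hD'2]
      nlinarith
    have hsum0 : 0 ≤ ∑ x, ‖g x‖ ^ 2 := Finset.sum_nonneg fun x _ => by positivity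
    have h8 : ∑ x, ‖Qop S Sig f x‖ ^ 2 ≤ 1 - (D' ^ 2)⁻¹ := by
      rw [Qop_sq]
      have hmul : (1 - (D' ^ 2)⁻¹) * (∑ x, ‖g x‖ ^ 2) ≤ (1 - (D' ^ 2)⁻¹) * 1 :=
        mul_le_mul_of_nonneg_left h7 ht0
      nlinarith
    show Real.sqrt (∑ x, ‖Qop S Sig f x‖ ^ 2) ≤ _
    exact Real.sqrt_le_sqrt h8
  have hle : opNorm2 (Qop S Sig) ≤ Real.sqrt (1 - (D' ^ 2)⁻¹) := by
    apply Real.sSup_le _ (Real.sqrt_nonneg _)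
    rintro _ ⟨f, hf, rfl⟩
    exact hkey f hf
  have hlt : Real.sqrt (1 - (D' ^ 2)⁻¹) < 1 := by
    have h0 : (0 : ℝ) < (D' ^ 2)⁻¹ := by positivity
    nlinarith [Real.sq_sqrt ht0, Real.sqrt_nonneg (1 - (D' ^ 2)⁻¹)]
  linarith

lemma strong_of_lt (hA1 : opNorm2 (Qop S Sig) < 1) (f : G → ℂ) :
    l2norm Finset.univ f ≤ ((Real.sqrt (1 - opNorm2 (Qop S Sig) ^ 2))⁻¹ + 1)
      * (l2norm Sᶜ f + l2norm Sigᶜ (dft f)) := by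
  set A := opNorm2 (Qop S Sig) with hA
  have hA0 : 0 ≤ A := Qop_nonneg S Sig
  have h1A : 0 < 1 - A ^ 2 := by nlinarith
  set D := (Real.sqrt (1 - A ^ 2))⁻¹ with hD
  have hD0 : 0 < D := inv_pos.2 (Real.sqrt_pos.2 h1A)
  set g : G → ℂ := fun x => if x ∈ S then f x else 0 with hg
  set h : G → ℂ := fun x => if x ∈ S then 0 else f x with hh
  have hsupp : ∀ x, x ∉ S → g x = 0 := fun x hx => by simp [hg, hx]
  have e0 : l2norm Finset.univ f ≤ l2norm Finset.univ g + l2norm Sᶜ f := by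
    have hsplit : ∑ x, ‖f x‖ ^ 2 = ∑ x ∈ S, ‖f x‖ ^ 2 + ∑ x ∈ Sᶜ, ‖f x‖ ^ 2 :=
      (Finset.sum_add_sum_compl S _).symm
    show Real.sqrt (∑ x, ‖f x‖ ^ 2) ≤ Real.sqrt (∑ x, ‖g x‖ ^ 2) + Real.sqrt (∑ x ∈ Sᶜ, ‖f x‖ ^ 2)
    rw [hsplit, hg, proj_sq S f]
    exact sqrt_add_le' _ _ (Finset.sum_nonneg fun x _ => by positivity)
      (Finset.sum_nonneg fun x _ => by positivity)
  have e1 : l2norm Finset.univ g ≤ D * l2norm Sigᶜ (dft g) := annih_of_lt S Sig hA1 g hsupp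
  have e2 : ∀ χ, dft g χ = dft f χ + -(dft h χ) := by
    intro χ
    have hfg : f = fun y => g y + h y := by
      funext y; by_cases hy : y ∈ S <;> simp [hg, hh, hy]
    have : dft f χ = dft g χ + dft h χ := by
      conv_lhs => rw [hfg]
      exact dft_add g h χ
    rw [this]; ring
  have e3 : l2norm Sigᶜ (dft g) ≤ l2norm Sigᶜ (dft f) + l2norm Sigᶜ (dft h) := by
    calc l2norm Sigᶜ (dft g) = l2norm Sigᶜ (fun χ => dft f χ + -(dft h χ)) :=
          l2norm_congr _ (fun χ _ => e2 χ)
      _ ≤ l2norm Sigᶜ (dft f) + l2norm Sigᶜ (fun χ => -(dft h χ)) := l2norm_add_le _ _ _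
      _ = l2norm Sigᶜ (dft f) + l2norm Sigᶜ (dft h) := by rw [l2norm_neg]
  have e4 : l2norm Sigᶜ (dft h) ≤ l2norm Sᶜ f := by
    have hsub : ∑ χ ∈ Sigᶜ, ‖dft h χ‖ ^ 2 ≤ ∑ χ : AddChar G ℂ, ‖dft h χ‖ ^ 2 :=
      Finset.sum_le_sum_of_subset_of_nonneg (Finset.subset_univ _) (fun χ _ _ => by positivity)
    have hph : ∑ χ : AddChar G ℂ, ‖dft h χ‖ ^ 2 = ∑ x ∈ Sᶜ, ‖f x‖ ^ 2 := by
      rw [plancherel_dft]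
      have hp : ∀ x : G, ‖h x‖ ^ 2 = if x ∈ Sᶜ then ‖f x‖ ^ 2 else 0 := by
        intro x; by_cases hx : x ∈ S <;> simp [hh, hx]
      simp_rw [hp]
      rw [Finset.sum_ite_mem, Finset.univ_inter]
    exact l2norm_le_of_sq_le_sq _ _ (by rw [← hph]; exact hsub)
  have hnn1 : 0 ≤ l2norm Sᶜ f := l2norm_nonneg _ _
  have hnn2 : 0 ≤ l2norm Sigᶜ (dft f) := l2norm_nonneg _ _
  have e5 : D * l2norm Sigᶜ (dft g) ≤ D * (l2norm Sigᶜ (dft f) + l2norm Sᶜ f) :=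
    mul_le_mul_of_nonneg_left (e3.trans (by linarith)) hD0.le
  nlinarith

end main

/-- with `A = ‖Q_Σ P_S‖`, the conditions (1) `A < 1`, (2) existence of
`D` with `‖f‖ ≤ D ‖f̂‖_{ℓ²(Ĝ∖Σ)}` for `f` supported in `S`, and (3) the strong
annihilating inequality, are equivalent; moreover when `A < 1` one can take
`D = (1-A²)^{-1/2}` and some `C` with `D ≤ C ≤ D + 1`. -/
theorem stmt12 {G : Type} [AddCommGroup G] [Fintype G] [DecidableEq G]
    (S : Finset G) (Sig : Finset (AddChar G ℂ))
    (A : ℝ)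
    (hA : A = opNorm2 (fun f : G → ℂ =>
      idft (fun χ => if χ ∈ Sig then
        dft (fun x => if x ∈ S then f x else 0) χ else 0))) :
    ((A < 1 ↔ ∃ D > 0, ∀ f : G → ℂ, (∀ x, x ∉ S → f x = 0) →
        l2norm Finset.univ f ≤ D * l2norm Sigᶜ (dft f)) ∧
     (A < 1 ↔ ∃ C : ℝ, ∀ f : G → ℂ,
        l2norm Finset.univ f ≤ C * (l2norm Sᶜ f + l2norm Sigᶜ (dft f))) ∧
     (A < 1 →
        (∀ f : G → ℂ, (∀ x, x ∉ S → f x = 0) →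
          l2norm Finset.univ f ≤ (Real.sqrt (1 - A ^ 2))⁻¹ * l2norm Sigᶜ (dft f)) ∧
        ∃ C : ℝ, (Real.sqrt (1 - A ^ 2))⁻¹ ≤ C ∧ C ≤ (Real.sqrt (1 - A ^ 2))⁻¹ + 1 ∧
          ∀ f : G → ℂ,
            l2norm Finset.univ f ≤ C * (l2norm Sᶜ f + l2norm Sigᶜ (dft f)))) := by
  have hA' : A = opNorm2 (Qop S Sig) := hA
  have hA0 : 0 ≤ A := hA' ▸ Qop_nonneg S Sig
  refine ⟨⟨?_, ?_⟩, ⟨?_, ?_⟩, ?_⟩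
  · intro h1
    have h1' : opNorm2 (Qop S Sig) < 1 := hA' ▸ h1
    refine ⟨(Real.sqrt (1 - A ^ 2))⁻¹,
      inv_pos.2 (Real.sqrt_pos.2 (by nlinarith)), fun f hf => ?_⟩
    rw [hA']
    exact annih_of_lt S Sig h1' f hf
  · intro h
    rw [hA']
    exact lt_of_annih S Sig h
  · intro h1
    have h1' : opNorm2 (Qop S Sig) < 1 := hA' ▸ h1
    refine ⟨(Real.sqrt (1 - A ^ 2))⁻¹ + 1, fun f => ?_⟩
    rw [hA']
    exact strong_of_lt S Sig h1' f
  · rintro ⟨C, hC⟩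
    rw [hA']
    apply lt_of_annih S Sig
    refine ⟨|C| + 1, by positivity, fun f hf => ?_⟩
    have hzero : l2norm Sᶜ f = 0 := by
      have hz : ∑ x ∈ Sᶜ, ‖f x‖ ^ 2 = 0 :=
        Finset.sum_eq_zero fun x hx => by
          rw [hf x (Finset.mem_compl.1 hx)]; simp
      show Real.sqrt (∑ x ∈ Sᶜ, ‖f x‖ ^ 2) = 0
      rw [hz, Real.sqrt_zero]
    have h0 := hC f
    rw [hzero, zero_add] at h0
    calc l2norm Finset.univ f ≤ C * l2norm Sigᶜ (dft f) := h0
      _ ≤ (|C| + 1) * l2norm Sigᶜ (dft f) :=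
          mul_le_mul_of_nonneg_right (by linarith [le_abs_self C]) (l2norm_nonneg _ _)
  · intro h1
    have h1' : opNorm2 (Qop S Sig) < 1 := hA' ▸ h1
    constructor
    · intro f hf
      rw [hA']
      exact annih_of_lt S Sig h1' f hf
    · refine ⟨(Real.sqrt (1 - A ^ 2))⁻¹ + 1, le_add_of_nonneg_right zero_le_one,
        le_refl _, fun f => ?_⟩
      rw [hA']
      exact strong_of_lt S Sig h1' f
end
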